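/- arXiv:2309.16803 — 2 statements merged into one kernel-verified Lean document; each statement's English description precedes it below -/
import Mathlib

section
/- Let n ≥ 2 and let A be a Young function such that ∫₀¹ (t/A(t))^{1/(n−1)} dt < ∞. Define Hₙ(s) = (∫₀ˢ (t/A(t))^{1/(n−1)} dt)^{(n−1)/n} for s ≥ 0, and the Sobolev conjugate Aₙ(t) = A(Hₙ⁻¹(t)). Then for every t > 0, one has 1/(Ã⁻¹(t)) · 1/(Aₙ⁻¹(t)) ≤ 1/t^{(n−1)/n}, where Ã is the Young conjugate of A and the inverses are generalized right-continuous inverses. -/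
open scoped ENNReal

/-- `Hₙ(s) = (∫₀ˢ (r/A(r))^{1/(n−1)} dr)^{(n−1)/n}`. -/
noncomputable def sobolevH (A : ℝ → ℝ) (n : ℕ) (s : ℝ) : ℝ :=
  (∫ r in (0 : ℝ)..s, (r / A r) ^ ((1 : ℝ) / ((n : ℝ) - 1))) ^ (((n : ℝ) - 1) / n)

/-- The generalized right-continuous inverse of `Hₙ`. -/
noncomputable def sobolevHInv (A : ℝ → ℝ) (n : ℕ) (t : ℝ) : ℝ :=
  sSup {s : ℝ | 0 ≤ s ∧ sobolevH A n s ≤ t}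

/-- The Sobolev conjugate `Aₙ(t) = A(Hₙ⁻¹(t))`. -/
noncomputable def sobolevConj (A : ℝ → ℝ) (n : ℕ) (t : ℝ) : ℝ :=
  A (sobolevHInv A n t)

/-- The Young conjugate `Ã(t) = sup {τ t − A τ : τ ≥ 0}`. -/
noncomputable def youngConj (A : ℝ → ℝ≥0∞) (t : ℝ) : ℝ≥0∞ :=
  ⨆ τ ∈ Set.Ici (0 : ℝ), (ENNReal.ofReal (τ * t) - A τ)

/-- The generalized right-continuous inverse `B⁻¹(s) = sup {t ≥ 0 : B t ≤ s}`. -/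
noncomputable def rcInv (B : ℝ → ℝ≥0∞) (s : ℝ≥0∞) : ℝ≥0∞ :=
  ⨆ t ∈ {t : ℝ | 0 ≤ t ∧ B t ≤ s}, ENNReal.ofReal t

section Aux

variable {A : ℝ → ℝ}

/-- Convexity ratio lemma: `A(a)/a ≤ A(b)/b` for `0 < a ≤ b`. -/
lemma young_ratio (hconv : ConvexOn ℝ (Set.Ici 0) A) (h0 : A 0 = 0)
    {a b : ℝ} (ha : 0 < a) (hab : a ≤ b) : b * A a ≤ a * A b := by
  have hb : 0 < b := ha.trans_le hab
  have h := hconv.2 (Set.self_mem_Ici (α := ℝ)) (Set.mem_Ici.2 hb.le)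
    (sub_nonneg.2 ((div_le_one hb).2 hab)) (div_pos ha hb).le (by ring)
  rw [smul_zero, zero_add, smul_eq_mul, smul_eq_mul, smul_eq_mul, h0, mul_zero, zero_add,
    div_mul_cancel₀ _ hb.ne'] at h
  have h2 := mul_le_mul_of_nonneg_left h hb.le
  calc b * A a ≤ b * (a / b * A b) := h2
    _ = a * A b := by field_simp

lemma young_mono (hconv : ConvexOn ℝ (Set.Ici 0) A) (h0 : A 0 = 0)
    (hnonneg : ∀ t : ℝ, 0 ≤ t → 0 ≤ A t) {a b : ℝ} (ha : 0 ≤ a) (hab : a ≤ b) :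
    A a ≤ A b := by
  rcases eq_or_lt_of_le ha with rfl | ha'
  · rw [h0]; exact hnonneg b (le_trans ha hab)
  · have hb : 0 < b := ha'.trans_le hab
    have h := young_ratio hconv h0 ha' hab
    have hAb := hnonneg b hb.le
    nlinarith

end Aux

/-- For `n ≥ 2` and a Young function `A` with `∫₀¹ (t/A(t))^{1/(n−1)} dt < ∞`,
one has `(Ã⁻¹(t))⁻¹ · (Aₙ⁻¹(t))⁻¹ ≤ t^{−(n−1)/n}` for every `t > 0`. -/
theorem inverse_conjugate_sobolev_inequality
    (n : ℕ) (hn : 2 ≤ n) (A : ℝ → ℝ)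
    (hconv : ConvexOn ℝ (Set.Ici 0) A) (h0 : A 0 = 0)
    (hnonneg : ∀ t : ℝ, 0 ≤ t → 0 ≤ A t) (hpos : ∀ t : ℝ, 0 < t → 0 < A t)
    (hint : MeasureTheory.IntegrableOn
      (fun r => (r / A r) ^ ((1 : ℝ) / ((n : ℝ) - 1))) (Set.Ioc 0 1)) :
    ∀ t : ℝ, 0 < t →
      (rcInv (youngConj (fun τ => ENNReal.ofReal (A τ))) (ENNReal.ofReal t))⁻¹ *
        (rcInv (fun τ => ENNReal.ofReal (sobolevConj A n τ)) (ENNReal.ofReal t))⁻¹ ≤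
      (ENNReal.ofReal (t ^ (((n : ℝ) - 1) / n)))⁻¹ := by
  intro t ht
  have hn2 : (2 : ℝ) ≤ (n : ℝ) := by exact_mod_cast hn
  have hp : (0 : ℝ) < (n : ℝ) - 1 := by linarith
  have hnR : (0 : ℝ) < (n : ℝ) := by linarith
  set g : ℝ → ℝ := fun r => (r / A r) ^ ((1 : ℝ) / ((n : ℝ) - 1)) with hg_def
  -- continuity of A
  have contA : ContinuousOn A (Set.Ioi 0) := by
    have h := hconv.continuousOn_interior
    rwa [interior_Ici] at h
  have cont0 : ContinuousWithinAt A (Set.Ici 0) 0 := by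
    rw [ContinuousWithinAt, h0]
    apply squeeze_zero' (g := fun s => s * A 1)
    · filter_upwards [self_mem_nhdsWithin] with s hs using hnonneg s hs
    · filter_upwards [self_mem_nhdsWithin,
        mem_nhdsWithin_of_mem_nhds (Iic_mem_nhds one_pos)] with s hs hs1
      rcases eq_or_lt_of_le (Set.mem_Ici.1 hs) with rfl | hs0
      · simp [h0]
      · have := young_ratio hconv h0 hs0 hs1
        nlinarith
    · have : Filter.Tendsto (fun s : ℝ => s * A 1) (nhds 0) (nhds 0) := by
        simpa using (continuous_mul_right (A 1)).tendsto (0 : ℝ)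
      exact this.mono_left nhdsWithin_le_nhds
  have contA' : ∀ M : ℝ, ContinuousOn A (Set.Icc 0 M) := by
    intro M x hx
    rcases eq_or_lt_of_le hx.1 with rfl | hx0
    · exact cont0.mono fun y hy => hy.1
    · exact (contA.continuousAt (Ioi_mem_nhds hx0)).continuousWithinAt
  -- find s with A s = t
  have hA1 : 0 < A 1 := hpos 1 one_pos
  obtain ⟨M, hM1, hMt⟩ : ∃ M : ℝ, 1 ≤ M ∧ t ≤ A M := by
    refine ⟨max 1 (t / A 1), le_max_left _ _, ?_⟩
    have hMpos : (0 : ℝ) < max 1 (t / A 1) := lt_of_lt_of_le one_pos (le_max_left _ _)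
    have hr := young_ratio hconv h0 one_pos (le_max_left 1 (t / A 1))
    have h1 : t / A 1 * A 1 = t := div_mul_cancel₀ _ hA1.ne'
    have h2 : t / A 1 * A 1 ≤ max 1 (t / A 1) * A 1 :=
      mul_le_mul_of_nonneg_right (le_max_right _ _) hA1.le
    nlinarith
  obtain ⟨s, hsmem, hAs⟩ := intermediate_value_Icc (le_trans zero_le_one hM1) (contA' M)
    (Set.mem_Icc.2 ⟨by rw [h0]; exact ht.le, hMt⟩)
  have hs0 : 0 < s := by
    rcases eq_or_lt_of_le hsmem.1 with rfl | h
    · rw [h0] at hAs; exact absurd hAs ht.ne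
    · exact h
  -- integrability of g
  have hg_int : ∀ b : ℝ, 0 < b → MeasureTheory.IntegrableOn g (Set.Ioc 0 b) := by
    intro b hb
    rcases le_or_gt b 1 with h | h
    · exact hint.mono_set (Set.Ioc_subset_Ioc_right h)
    · rw [← Set.Ioc_union_Ioc_eq_Ioc zero_le_one h.le]
      refine hint.union ?_
      have contg : ContinuousOn g (Set.Icc 1 b) := by
        refine ContinuousOn.rpow_const ?_ fun x _ => Or.inr (by positivity)
        refine ContinuousOn.div continuousOn_id (contA.mono fun r hr => lt_of_lt_of_le one_pos hr.1)
          fun r hr => (hpos r (lt_of_lt_of_le one_pos hr.1)).ne'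
      exact (contg.integrableOn_Icc).mono_set Set.Ioc_subset_Icc_self
  have hg_ii : ∀ a b : ℝ, 0 ≤ a → a ≤ b → IntervalIntegrable g MeasureTheory.volume a b := by
    intro a b ha hab
    rcases eq_or_lt_of_le hab with rfl | hab'
    · exact IntervalIntegrable.refl
    · have hb : 0 < b := lt_of_le_of_lt ha hab'
      rw [intervalIntegrable_iff_integrableOn_Ioc_of_le hab]
      exact (hg_int b hb).mono_set (Set.Ioc_subset_Ioc ha le_rfl)
  have hg_nonneg : ∀ r : ℝ, 0 ≤ r → 0 ≤ g r := by
    intro r hr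
    exact Real.rpow_nonneg (div_nonneg hr (hnonneg r hr)) _
  -- strict monotonicity of the integral
  have hI_nonneg : ∀ b : ℝ, 0 ≤ b → 0 ≤ ∫ r in (0:ℝ)..b, g r := by
    intro b hb
    exact intervalIntegral.integral_nonneg hb fun u hu => hg_nonneg u hu.1
  have hI_strict : ∀ a b : ℝ, 0 < a → a < b →
      (∫ r in (0:ℝ)..a, g r) < ∫ r in (0:ℝ)..b, g r := by
    intro a b ha hab
    have h1 := hg_ii 0 a le_rfl ha.le
    have h2 := hg_ii a b ha.le hab.le
    have hadd := intervalIntegral.integral_add_adjacent_intervals h1 h2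
    have hpos' : 0 < ∫ r in a..b, g r := by
      refine intervalIntegral.intervalIntegral_pos_of_pos_on h2 ?_ hab
      intro x hx
      have hx0 : 0 < x := ha.trans hx.1
      exact Real.rpow_pos_of_pos (div_pos hx0 (hpos x hx0)) _
    linarith
  -- lower bound on the integral up to s
  have hIlb : s * (s / t) ^ ((1:ℝ) / ((n:ℝ) - 1)) ≤ ∫ r in (0:ℝ)..s, g r := by
    rw [intervalIntegral.integral_of_le hs0.le]
    have hmono := MeasureTheory.setIntegral_mono_on
      (MeasureTheory.integrableOn_const (by simp [Real.volume_Ioc]) (by simp))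
      (hg_int s hs0) measurableSet_Ioc (f := fun _ => (s / t) ^ ((1:ℝ) / ((n:ℝ) - 1)))
      (g := g) ?_
    · have hconst := MeasureTheory.setIntegral_const
        (μ := MeasureTheory.volume) (s := Set.Ioc (0:ℝ) s) ((s / t) ^ ((1:ℝ) / ((n:ℝ) - 1)))
      rw [MeasureTheory.measureReal_def, Real.volume_Ioc, sub_zero, ENNReal.toReal_ofReal hs0.le, smul_eq_mul] at hconst
      rw [← hconst]
      exact hmono
    · intro r hr
      have hr0 : 0 < r := hr.1
      have hAr : 0 < A r := hpos r hr0
      have hAspos : 0 < A s := by rw [hAs]; exact ht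
      have hdiv : s / t ≤ r / A r := by
        rw [← hAs, div_le_div_iff₀ hAspos hAr]
        have := young_ratio hconv h0 hr0 hr.2
        linarith
      exact Real.rpow_le_rpow (by positivity) hdiv (by positivity)
  -- the rpow computation
  have e2 : 1/((n:ℝ)-1) * (((n:ℝ)-1)/n) = 1/(n:ℝ) := by field_simp
  have e3 : ((n:ℝ)-1)/n + 1/(n:ℝ) = 1 := by field_simp; ring
  have hkey : (s * (s / t) ^ ((1:ℝ)/((n:ℝ)-1))) ^ (((n:ℝ)-1)/(n:ℝ))
      = s / t ^ ((1:ℝ)/(n:ℝ)) := by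
    rw [Real.div_rpow hs0.le ht.le, Real.mul_rpow hs0.le (by positivity),
      Real.div_rpow (by positivity) (by positivity), ← Real.rpow_mul hs0.le,
      ← Real.rpow_mul ht.le, e2, mul_div_assoc', ← Real.rpow_add hs0, e3, Real.rpow_one]
  -- lower bound for sobolevH A n s
  have hy_lb : s / t ^ ((1:ℝ)/(n:ℝ)) ≤ sobolevH A n s := by
    rw [← hkey]
    unfold sobolevH
    exact Real.rpow_le_rpow (by positivity) hIlb (by positivity)
  have hy0 : 0 ≤ sobolevH A n s := Real.rpow_nonneg (hI_nonneg s hs0.le) _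
  -- the generalized inverse of sobolevH at sobolevH s equals s
  have hSub : ∀ u, u ∈ {u : ℝ | 0 ≤ u ∧ sobolevH A n u ≤ sobolevH A n s} → u ≤ s := by
    rintro u ⟨hu0, hu⟩
    by_contra hus
    push_neg at hus
    have hlt : sobolevH A n s < sobolevH A n u :=
      Real.rpow_lt_rpow (hI_nonneg s hs0.le) (hI_strict s u hs0 hus) (by positivity)
    linarith
  have hinv_eq : sobolevHInv A n (sobolevH A n s) = s := by
    unfold sobolevHInv
    exact le_antisymm (csSup_le ⟨s, hs0.le, le_rfl⟩ hSub) (le_csSup ⟨s, hSub⟩ ⟨hs0.le, le_rfl⟩)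
  have hconj : sobolevConj A n (sobolevH A n s) = t := by
    unfold sobolevConj; rw [hinv_eq, hAs]
  -- membership for the Sobolev-conjugate inverse
  have hY : ENNReal.ofReal (sobolevH A n s) ≤
      rcInv (fun τ => ENNReal.ofReal (sobolevConj A n τ)) (ENNReal.ofReal t) := by
    unfold rcInv
    have hmem : sobolevH A n s ∈
        {τ : ℝ | 0 ≤ τ ∧ ENNReal.ofReal (sobolevConj A n τ) ≤ ENNReal.ofReal t} :=
      ⟨hy0, by rw [hconj]⟩
    exact le_biSup _ hmem
  -- membership for the Young-conjugate inverse
  have hYoung : ∀ τ : ℝ, 0 ≤ τ → τ * (t / s) ≤ t + A τ := by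
    intro τ hτ
    rcases le_or_gt τ s with h | h
    · have h1 : τ * (t / s) ≤ t := by
        rw [mul_div_assoc', div_le_iff₀ hs0]; nlinarith
      linarith [hnonneg τ hτ]
    · have h2 := young_ratio hconv h0 hs0 h.le
      rw [hAs] at h2
      have h1 : τ * (t / s) ≤ A τ := by
        rw [mul_div_assoc', div_le_iff₀ hs0]; nlinarith
      linarith
  have hX : ENNReal.ofReal (t / s) ≤
      rcInv (youngConj fun τ => ENNReal.ofReal (A τ)) (ENNReal.ofReal t) := by
    unfold rcInv
    have hmem : t / s ∈
        {τ : ℝ | 0 ≤ τ ∧ youngConj (fun τ => ENNReal.ofReal (A τ)) τ ≤ ENNReal.ofReal t} := by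
      refine ⟨(div_pos ht hs0).le, ?_⟩
      unfold youngConj
      refine iSup₂_le fun τ hτ => ?_
      rw [tsub_le_iff_right, ← ENNReal.ofReal_add ht.le (hnonneg τ hτ)]
      exact ENNReal.ofReal_le_ofReal (hYoung τ hτ)
    exact le_biSup _ hmem
  -- final product bound
  have hxy : t ^ (((n:ℝ)-1)/(n:ℝ)) ≤ (t / s) * sobolevH A n s := by
    have htn : (0:ℝ) < t ^ ((1:ℝ)/(n:ℝ)) := Real.rpow_pos_of_pos ht _
    have h1 : (t/s) * (s / t ^ ((1:ℝ)/(n:ℝ))) ≤ (t/s) * sobolevH A n s :=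
      mul_le_mul_of_nonneg_left hy_lb (by positivity)
    have h2 : (t/s) * (s / t ^ ((1:ℝ)/(n:ℝ))) = t / t ^ ((1:ℝ)/(n:ℝ)) := by
      field_simp
    have h3 : t / t ^ ((1:ℝ)/(n:ℝ)) = t ^ (((n:ℝ)-1)/(n:ℝ)) := by
      rw [div_eq_iff htn.ne', ← Real.rpow_add ht, e3, Real.rpow_one]
    linarith
  refine le_trans (mul_le_mul' (ENNReal.inv_le_inv.2 hX) (ENNReal.inv_le_inv.2 hY)) ?_
  rw [← ENNReal.mul_inv (Or.inl (ENNReal.ofReal_pos.2 (div_pos ht hs0)).ne')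
    (Or.inl ENNReal.ofReal_ne_top), ← ENNReal.ofReal_mul (div_pos ht hs0).le]
  exact ENNReal.inv_le_inv.2 (ENNReal.ofReal_le_ofReal hxy)
end

section
/- (Key step of the previous lemma.) Let n ≥ 2 and A a Young function with ∫₀¹ (t/A(t))^{1/(n−1)} dt < ∞ and ∫₁^∞ (t/A(t))^{1/(n−1)} dt = ∞. With Hₙ(s) = (∫₀ˢ (t/A(t))^{1/(n−1)} dt)^{(n−1)/n}, one has lim_{t→∞} Hₙ⁻¹(t)/t = ∞, where Hₙ⁻¹ is the generalized inverse of Hₙ. -/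
open MeasureTheory Set Filter


/-- If `∫₀¹ (t/A(t))^{1/(n−1)} dt < ∞` and `∫₁^∞ (t/A(t))^{1/(n−1)} dt = ∞`, then
`Hₙ⁻¹(t)/t → ∞` as `t → ∞`. -/
theorem sobolevHInv_superlinear
    (n : ℕ) (hn : 2 ≤ n) (A : ℝ → ℝ)
    (hconv : ConvexOn ℝ (Set.Ici 0) A) (h0 : A 0 = 0)
    (hnonneg : ∀ t : ℝ, 0 ≤ t → 0 ≤ A t) (hpos : ∀ t : ℝ, 0 < t → 0 < A t)
    (hint : MeasureTheory.IntegrableOn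
      (fun r => (r / A r) ^ ((1 : ℝ) / ((n : ℝ) - 1))) (Set.Ioc 0 1))
    (hdiv : ¬ MeasureTheory.IntegrableOn
      (fun r => (r / A r) ^ ((1 : ℝ) / ((n : ℝ) - 1))) (Set.Ioi 1)) :
    Filter.Tendsto (fun t => sobolevHInv A n t / t) Filter.atTop Filter.atTop := by
  set f : ℝ → ℝ := fun r => (r / A r) ^ ((1 : ℝ) / ((n : ℝ) - 1)) with hf
  have hm0 : (0:ℝ) < (n:ℝ) - 1 := by
    have : (2:ℝ) ≤ n := by exact_mod_cast hn
    linarith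
  have he : (0:ℝ) < 1 / ((n:ℝ) - 1) := by positivity
  -- nonnegativity of f on [0,∞)
  have hf_nonneg : ∀ r : ℝ, 0 ≤ r → 0 ≤ f r := fun r hr =>
    Real.rpow_nonneg (div_nonneg hr (hnonneg r hr)) _
  -- antitone on (0,∞)
  have hanti : AntitoneOn f (Set.Ioi (0:ℝ)) := by
    intro a ha b hb hab
    have ha' : (0:ℝ) < a := ha
    have hb' : (0:ℝ) < b := hb
    have hs := hconv.slope_mono (Set.self_mem_Ici)
      (show a ∈ Set.Ici (0:ℝ) \ {0} from ⟨le_of_lt ha', ne_of_gt ha'⟩)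
      (show b ∈ Set.Ici (0:ℝ) \ {0} from ⟨le_of_lt hb', ne_of_gt hb'⟩) hab
    simp only [slope, h0, vsub_eq_sub, sub_zero, smul_eq_mul] at hs
    -- hs : a⁻¹ * A a ≤ b⁻¹ * A b  (roughly)
    have hAa := hpos a ha'
    have hAb := hpos b hb'
    have hdiv_le : b / A b ≤ a / A a := by
      rw [div_le_div_iff₀ hAb hAa]
      have h1 : A a / a ≤ A b / b := by
        simpa [div_eq_inv_mul] using hs
      rw [div_le_div_iff₀ ha' hb'] at h1
      nlinarith
    exact Real.rpow_le_rpow (div_nonneg hb'.le hAb.le) hdiv_le he.le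
  -- integrability on every Ioc 0 s
  have hInt : ∀ s : ℝ, IntegrableOn f (Set.Ioc 0 s) := by
    intro s
    rcases le_or_gt s 1 with h | h
    · exact hint.mono_set (Set.Ioc_subset_Ioc_right h)
    · have h1 : IntegrableOn f (Set.Ioc 1 s) := by
        have : IntegrableOn f (Set.Icc 1 s) :=
          AntitoneOn.integrableOn_isCompact isCompact_Icc
            (hanti.mono (fun x hx => lt_of_lt_of_le one_pos hx.1))
        exact this.mono_set Set.Ioc_subset_Icc_self
      have : Set.Ioc (0:ℝ) s = Set.Ioc 0 1 ∪ Set.Ioc 1 s :=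
        (Set.Ioc_union_Ioc_eq_Ioc (by norm_num) h.le).symm
      rw [this]
      exact hint.union h1
  have hII : ∀ a b : ℝ, 0 ≤ a → a ≤ b → IntervalIntegrable f volume a b := by
    intro a b ha hab
    rw [intervalIntegrable_iff, Set.uIoc_of_le hab]
    exact (hInt b).mono_set (Set.Ioc_subset_Ioc_left ha)
  -- the partial integral g
  set g : ℝ → ℝ := fun s => ∫ r in (0:ℝ)..s, f r with hg
  have hg_add : ∀ s : ℝ, 1 ≤ s → g s = g 1 + ∫ r in (1:ℝ)..s, f r := by
    intro s hs
    rw [hg]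
    exact (intervalIntegral.integral_add_adjacent_intervals
      (hII 0 1 le_rfl one_pos.le) (hII 1 s one_pos.le hs)).symm
  have hg_nonneg : ∀ a b : ℝ, 0 ≤ a → a ≤ b → 0 ≤ ∫ r in a..b, f r := by
    intro a b ha hab
    exact intervalIntegral.integral_nonneg hab (fun u hu => hf_nonneg u (ha.trans hu.1))
  have hg_mono : ∀ a b : ℝ, 0 ≤ a → a ≤ b → g a ≤ g b := by
    intro a b ha hab
    have := (intervalIntegral.integral_add_adjacent_intervals
      (hII 0 a le_rfl ha) (hII a b ha hab))
    have h2 := hg_nonneg a b ha hab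
    simp only [hg]
    linarith [this]
  -- divergence of g
  have hgtop : Tendsto g atTop atTop := by
    rw [tendsto_atTop]
    intro b
    by_contra hcon
    -- then g s < b for arbitrarily large s, hence (by monotonicity) for all s ≥ 0... 
    have hcon' : ∀ x : ℝ, ∃ u, x ≤ u ∧ g u < b := by
      intro x
      rcases frequently_atTop.mp (not_eventually.mp hcon) x with ⟨u, hu1, hu2⟩
      exact ⟨u, hu1, lt_of_not_ge hu2⟩
    have hbound : ∀ s : ℝ, 0 ≤ s → g s < b := by
      intro s hs
      rcases hcon' s with ⟨u, hu1, hu2⟩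
      exact lt_of_le_of_lt (hg_mono s u hs hu1) hu2
    have : IntegrableOn f (Set.Ioi 1) := by
      apply MeasureTheory.integrableOn_Ioi_of_intervalIntegral_norm_bounded b 1
        (fun i : ℝ => (hInt i).mono_set (Set.Ioc_subset_Ioc_left one_pos.le)) tendsto_id
      filter_upwards [eventually_ge_atTop (1:ℝ)] with s hs
      have hnorm : (∫ x in (1:ℝ)..s, ‖f x‖) = ∫ x in (1:ℝ)..s, f x := by
        apply intervalIntegral.integral_congr
        intro x hx
        rw [Set.uIcc_of_le hs] at hx
        exact Real.norm_of_nonneg (hf_nonneg x (le_trans one_pos.le hx.1))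
      rw [hnorm]
      have h1 := hg_add s hs
      have h2 := hg_nonneg 0 1 le_rfl one_pos.le
      have h3 := hbound s (le_trans one_pos.le hs)
      simp only [hg] at h1 h2 h3 ⊢
      linarith
    exact hdiv this
  -- p
  set p : ℝ := ((n:ℝ) - 1) / n with hpdef
  have hnpos : (0:ℝ) < n := by positivity
  have hp0 : 0 < p := by positivity
  have hp1 : p < 1 := by
    rw [hpdef, div_lt_one hnpos]; linarith
  have hH : ∀ s : ℝ, sobolevH A n s = (g s) ^ p := fun s => rfl
  -- H tends to infinity
  have hHtop : Tendsto (sobolevH A n) atTop atTop := by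
    have := (tendsto_rpow_atTop hp0).comp hgtop
    exact this
  -- linear bound on g
  set C : ℝ := g 1 + f 1 + 1 with hC
  have hg1 : 0 ≤ g 1 := hg_nonneg 0 1 le_rfl one_pos.le
  have hf1 : 0 ≤ f 1 := hf_nonneg 1 one_pos.le
  have hCpos : 0 < C := by rw [hC]; linarith
  have hglin : ∀ s : ℝ, 1 ≤ s → g s ≤ C * s := by
    intro s hs
    have h1 : (∫ r in (1:ℝ)..s, f r) ≤ ∫ r in (1:ℝ)..s, f 1 := by
      apply intervalIntegral.integral_mono_on hs (hII 1 s one_pos.le hs)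
        intervalIntegrable_const
      intro x hx
      exact hanti (Set.mem_Ioi.mpr one_pos) (Set.mem_Ioi.mpr (lt_of_lt_of_le one_pos hx.1)) hx.1
    rw [intervalIntegral.integral_const, smul_eq_mul] at h1
    have h2 := hg_add s hs
    have : g s ≤ g 1 + (s - 1) * f 1 := by rw [h2]; linarith
    nlinarith
  -- H is sublinear
  have hsub : ∀ ε : ℝ, 0 < ε → ∀ᶠ s in atTop, sobolevH A n s ≤ ε * s := by
    intro ε hε
    have hto : Tendsto (fun s : ℝ => C ^ p * s ^ (p - 1)) atTop (nhds 0) := by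
      have := (tendsto_rpow_neg_atTop (y := 1 - p) (by linarith)).const_mul (C ^ p)
      simpa [neg_sub] using this
    have hev : ∀ᶠ s in atTop, C ^ p * s ^ (p - 1) < ε :=
      hto.eventually (eventually_lt_nhds hε)
    filter_upwards [hev, eventually_ge_atTop (1:ℝ)] with s hs1 hs2
    have hspos : (0:ℝ) < s := lt_of_lt_of_le one_pos hs2
    have hgs : 0 ≤ g s := by
      have := hg_mono 0 s le_rfl hspos.le
      simpa [hg, intervalIntegral.integral_same] using this
    have h1 : g s ^ p ≤ (C * s) ^ p :=
      Real.rpow_le_rpow hgs (hglin s hs2) hp0.le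
    have h2 : (C * s) ^ p = C ^ p * s ^ p := Real.mul_rpow hCpos.le hspos.le
    have h3 : s ^ p = s ^ (p - 1) * s := by
      nth_rewrite 3 [← Real.rpow_one s]
      rw [← Real.rpow_add hspos]
      ring_nf
    calc sobolevH A n s = g s ^ p := hH s
      _ ≤ C ^ p * (s ^ (p - 1) * s) := by rw [← h3, ← h2]; exact h1
      _ = (C ^ p * s ^ (p - 1)) * s := by ring
      _ ≤ ε * s := by
          apply mul_le_mul_of_nonneg_right hs1.le hspos.le
  -- final argument
  rw [tendsto_atTop]
  intro b
  set M : ℝ := max b 1 with hM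
  have hM1 : (1:ℝ) ≤ M := le_max_right _ _
  have hMpos : (0:ℝ) < M := lt_of_lt_of_le one_pos hM1
  have hbM : b ≤ M := le_max_left _ _
  rcases eventually_atTop.mp (hsub (1/M) (by positivity)) with ⟨S, hS⟩
  filter_upwards [eventually_ge_atTop (max S 1)] with t ht
  have htS : S ≤ t := le_trans (le_max_left _ _) ht
  have ht1 : (1:ℝ) ≤ t := le_trans (le_max_right _ _) ht
  have htpos : (0:ℝ) < t := lt_of_lt_of_le one_pos ht1
  have hMt : S ≤ M * t := by nlinarith
  have hHMt : sobolevH A n (M * t) ≤ t := by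
    have := hS (M * t) hMt
    calc sobolevH A n (M * t) ≤ 1/M * (M * t) := this
      _ = t := by field_simp
  -- bounded above
  have hbdd : BddAbove {s : ℝ | 0 ≤ s ∧ sobolevH A n s ≤ t} := by
    rcases eventually_atTop.mp (hHtop.eventually (eventually_gt_atTop t)) with ⟨S', hS'⟩
    refine ⟨S', fun s hs => ?_⟩
    by_contra hcon
    push_neg at hcon
    exact absurd hs.2 (not_le.mpr (hS' s hcon.le))
  have hmem : M * t ∈ {s : ℝ | 0 ≤ s ∧ sobolevH A n s ≤ t} :=
    ⟨by positivity, hHMt⟩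
  have hle : M * t ≤ sobolevHInv A n t := le_csSup hbdd hmem
  calc b ≤ M := hbM
    _ = M * t / t := by field_simp
    _ ≤ sobolevHInv A n t / t := by
        exact div_le_div_of_nonneg_right hle htpos.le
end
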